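/- Let d ≥ 2, let L be a line in ℝ^2, let B₀ ⊆ ℝ^2 \ L with |B₀| = binom(d+1,2) such that B₀ is not contained in any curve of degree at most d−1, and let B₁ ⊆ L with |B₁| > d. Then A := B₀ ∪ B₁ is not contained in any curve of degree at most d. -/

import Mathlib

open scoped Classical

noncomputable section

/-- The zero set in `ℝ × ℝ` of a polynomial in two variables. -/
def zeroSet (p : MvPolynomial (Fin 2) ℝ) : Set (ℝ × ℝ) :=
  {x | MvPolynomial.eval ![x.1, x.2] p = 0}

/-- `C` is a curve of degree `e`: the zero set of a polynomial of total degree `e`. -/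
def IsCurve (e : ℕ) (C : Set (ℝ × ℝ)) : Prop :=
  ∃ p : MvPolynomial (Fin 2) ℝ, p.totalDegree = e ∧ C = zeroSet p

/-- `C` is a curve of degree at most `d` (and at least `1`). -/
def IsCurveLe (d : ℕ) (C : Set (ℝ × ℝ)) : Prop :=
  ∃ e, 1 ≤ e ∧ e ≤ d ∧ IsCurve e C

/-- Index set for the `d`-Veronese map: pairs `(n, m)` with `1 ≤ n + m ≤ d`.
It has `(d+2).choose 2 - 1` elements. -/
abbrev VIdx (d : ℕ) : Type :=
  {q : Fin (d + 1) × Fin (d + 1) // 1 ≤ (q.1 : ℕ) + (q.2 : ℕ) ∧ (q.1 : ℕ) + (q.2 : ℕ) ≤ d}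

/-- The `d`-Veronese map `ℝ² → ℝ^((d+2).choose 2 - 1)`. -/
def vero (d : ℕ) (a : ℝ × ℝ) : VIdx d → ℝ :=
  fun q => a.1 ^ (q.1.1 : ℕ) * a.2 ^ (q.1.2 : ℕ)

/-- Dimension of the affine hull of a set. -/
noncomputable def adim {α : Type*} (S : Set (α → ℝ)) : ℕ :=
  Module.finrank ℝ (affineSpan ℝ S).direction

/-- Dimension of an affine subspace. -/
noncomputable def fdim {α : Type*} (F : AffineSubspace ℝ (α → ℝ)) : ℕ :=
  Module.finrank ℝ F.direction

section MyAux

open MvPolynomial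

local notation "MvP" => MvPolynomial (Fin 2) ℝ

lemma my_aeval_eq_eval (v : Fin 2 → ℝ) (u : MvP) : MvPolynomial.aeval v u = eval v u := by
  rw [← MvPolynomial.coe_aeval_eq_eval]; rfl

lemma my_eval_aeval (v : Fin 2 → ℝ) (g : Fin 2 → MvP) (w : MvP) :
    eval v (MvPolynomial.aeval g w) = eval (fun i => eval v (g i)) w := by
  rw [← my_aeval_eq_eval, MvPolynomial.comp_aeval_apply]
  simp [my_aeval_eq_eval]

lemma my_peval_aeval (t : ℝ) (g : Fin 2 → Polynomial ℝ) (w : MvP) :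
    Polynomial.eval t (MvPolynomial.aeval g w) = eval (fun i => Polynomial.eval t (g i)) w := by
  rw [← Polynomial.coe_aeval_eq_eval, MvPolynomial.comp_aeval_apply]
  simp [Polynomial.coe_aeval_eq_eval, my_aeval_eq_eval]

lemma my_natDegree_aeval_le (f : Fin 2 → Polynomial ℝ) (hf : ∀ i, (f i).natDegree ≤ 1)
    (p : MvP) : (MvPolynomial.aeval f p).natDegree ≤ p.totalDegree := by
  conv_lhs => rw [p.as_sum, map_sum]
  apply Polynomial.natDegree_sum_le_of_forall_le
  intro m hm
  rw [MvPolynomial.aeval_monomial]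
  refine Polynomial.natDegree_mul_le.trans ?_
  have h1 : (algebraMap ℝ (Polynomial ℝ) (coeff m p)).natDegree = 0 := Polynomial.natDegree_C _
  rw [h1, zero_add, Finsupp.prod]
  refine Polynomial.natDegree_prod_le _ _ |>.trans ?_
  calc ∑ i ∈ m.support, (f i ^ m i).natDegree
      ≤ ∑ i ∈ m.support, m i * 1 := Finset.sum_le_sum fun i _ =>
        (Polynomial.natDegree_pow_le).trans (Nat.mul_le_mul_left _ (hf i))
    _ = m.sum fun _ e => e := by simp [Finsupp.sum]
    _ ≤ p.totalDegree := le_totalDegree hm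

lemma my_totalDegree_aeval_le (f : Fin 2 → MvP) (hf : ∀ i, (f i).totalDegree ≤ 1)
    (p : MvP) : (MvPolynomial.aeval f p).totalDegree ≤ p.totalDegree := by
  conv_lhs => rw [p.as_sum, map_sum]
  apply totalDegree_finsetSum_le
  intro m hm
  rw [MvPolynomial.aeval_monomial]
  refine (totalDegree_mul _ _).trans ?_
  have h1 : ((algebraMap ℝ MvP) (coeff m p)).totalDegree = 0 := totalDegree_C _
  rw [h1, zero_add, Finsupp.prod]
  refine (totalDegree_finset_prod _ _).trans ?_
  calc ∑ i ∈ m.support, (f i ^ m i).totalDegree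
      ≤ ∑ i ∈ m.support, m i * 1 := Finset.sum_le_sum fun i _ =>
        (totalDegree_pow _ _).trans (Nat.mul_le_mul_left _ (hf i))
    _ = m.sum fun _ e => e := by simp [Finsupp.sum]
    _ ≤ p.totalDegree := le_totalDegree hm

lemma my_X1_dvd (w : MvP) : (X 1 : MvP) ∣ (w - MvPolynomial.aeval ![X 0, 0] w) := by
  induction w using MvPolynomial.induction_on with
  | C s => simp [MvPolynomial.algebraMap_eq]
  | add p q hp hq =>
    rw [map_add]
    have h : p + q - (MvPolynomial.aeval ![X 0, 0] p + MvPolynomial.aeval ![X 0, 0] q)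
        = (p - MvPolynomial.aeval ![X 0, 0] p) + (q - MvPolynomial.aeval ![X 0, 0] q) := by ring
    rw [h]; exact dvd_add hp hq
  | mul_X p i hp =>
    have hi : i = 0 ∨ i = 1 := by fin_cases i <;> simp
    rcases hi with rfl | rfl
    · rw [map_mul, MvPolynomial.aeval_X]
      have h : p * X 0 - MvPolynomial.aeval ![X 0, 0] p * (![X 0, 0] 0)
          = (p - MvPolynomial.aeval ![X 0, 0] p) * X 0 := by
        simp; ring
      rw [h]; exact hp.mul_right _
    · rw [map_mul, MvPolynomial.aeval_X]
      have h : p * X 1 - MvPolynomial.aeval ![X 0, 0] p * (![(X 0 : MvP), 0] 1) = p * X 1 := by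
        simp
      rw [h]; exact dvd_mul_left _ _

lemma my_exists_abc (l : MvP) (hdeg : l.totalDegree = 1) :
    ∃ a b c : ℝ, ¬(a = 0 ∧ b = 0) ∧ l = C a * X 0 + C b * X 1 + C c := by
  set a := coeff (Finsupp.single 0 1) l with ha'
  set b := coeff (Finsupp.single 1 1) l with hb'
  set c := coeff 0 l with hc'
  have hsum : ∀ m : Fin 2 →₀ ℕ, (m.sum fun _ e => e) = m 0 + m 1 := by
    intro m
    rw [Finsupp.sum_fintype _ _ (fun _ => rfl), Fin.sum_univ_two]
  have h01 : (Finsupp.single (0 : Fin 2) 1) ≠ Finsupp.single 1 1 := by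
    intro h
    have := DFunLike.congr_fun h 0
    simp [Finsupp.single_apply] at this
  have hz0 : (0 : Fin 2 →₀ ℕ) ≠ Finsupp.single 0 1 := by
    intro h; simpa using h.symm
  have hz1 : (0 : Fin 2 →₀ ℕ) ≠ Finsupp.single 1 1 := by
    intro h; simpa using h.symm
  have heq : l = C a * X 0 + C b * X 1 + C c := by
    ext m
    rw [coeff_add, coeff_add, coeff_C]
    rw [coeff_C_mul, coeff_C_mul, coeff_X', coeff_X']
    by_cases h0 : m = Finsupp.single 0 1
    · subst h0
      rw [if_neg (Ne.symm h01), if_neg hz0]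
      simp [ha']
    · by_cases h1 : m = Finsupp.single 1 1
      · subst h1
        rw [if_neg h01, if_neg hz1]
        simp [hb']
      · by_cases h2 : m = 0
        · subst h2
          rw [if_neg (fun h => hz0 h.symm), if_neg (fun h => hz1 h.symm), if_pos rfl]
          simp [hc']
        · rw [if_neg (fun h => h0 h.symm), if_neg (fun h => h1 h.symm), if_neg (fun h => h2 h.symm)]
          simp only [mul_zero, add_zero, zero_add]
          by_contra hne
          have hmem : m ∈ l.support := by rwa [mem_support_iff]
          have hle : m 0 + m 1 ≤ 1 := by
            rw [← hsum m]
            exact hdeg ▸ le_totalDegree hmem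
          have : (m 0 = 0 ∧ m 1 = 0) ∨ (m 0 = 1 ∧ m 1 = 0) ∨ (m 0 = 0 ∧ m 1 = 1) := by omega
          rcases this with ⟨u, v⟩ | ⟨u, v⟩ | ⟨u, v⟩
          · exact h2 (by ext i; fin_cases i <;> simp [u, v])
          · exact h0 (by ext i; fin_cases i <;> simp [Finsupp.single_apply, u, v])
          · exact h1 (by ext i; fin_cases i <;> simp [Finsupp.single_apply, u, v])
  refine ⟨a, b, c, ?_, heq⟩
  rintro ⟨ha0, hb0⟩
  rw [ha0, hb0] at heq
  simp only [map_zero, zero_mul, zero_add] at heq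
  rw [heq, totalDegree_C] at hdeg
  exact one_ne_zero hdeg.symm

lemma my_vanish (p : MvP) (a b c : ℝ) (hb : b ≠ 0) (S : Finset (ℝ × ℝ))
    (hline : ∀ s ∈ S, a * s.1 + b * s.2 + c = 0)
    (hz : ∀ s ∈ S, eval ![s.1, s.2] p = 0)
    (hcard : p.totalDegree < S.card) :
    ∀ x : ℝ, eval ![x, (-c - a * x) / b] p = 0 := by
  set f : Fin 2 → Polynomial ℝ :=
    ![Polynomial.X, Polynomial.C (-c/b) + Polynomial.C (-(a/b)) * Polynomial.X] with hf
  have hfd : ∀ i, (f i).natDegree ≤ 1 := by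
    intro i; fin_cases i
    · simp [hf]
    · simp only [hf, Matrix.cons_val_one, Matrix.head_cons]
      refine (Polynomial.natDegree_add_le _ _).trans (max_le (by simp) ?_)
      exact (Polynomial.natDegree_C_mul_le _ _).trans (by simp)
  set Q := MvPolynomial.aeval f p with hQ
  have heval : ∀ t : ℝ, Q.eval t = eval ![t, (-c - a * t) / b] p := by
    intro t
    rw [hQ, my_peval_aeval]
    have hv : (fun i => Polynomial.eval t (f i)) = ![t, (-c - a * t) / b] := by
      funext i; fin_cases i
      · simp [hf]
      · show Polynomial.eval t (f 1) = ![t, (-c - a * t) / b] 1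
        simp only [hf, Matrix.cons_val_one, Matrix.head_cons, Polynomial.eval_add,
          Polynomial.eval_mul, Polynomial.eval_C, Polynomial.eval_X, Matrix.cons_val_one,
          Matrix.cons_val_zero]
        field_simp
        ring
    rw [hv]
  have hsnd : ∀ s ∈ S, s.2 = (-c - a * s.1) / b := by
    intro s hs
    rw [eq_div_iff hb]
    have := hline s hs
    linarith
  have hinj : Set.InjOn Prod.fst (S : Set (ℝ × ℝ)) := by
    intro s hs t ht h
    have h2 : s.2 = t.2 := by rw [hsnd s hs, hsnd t ht, h]
    exact Prod.ext h h2
  have hQ0 : Q = 0 := by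
    apply Polynomial.eq_zero_of_natDegree_lt_card_of_eval_eq_zero' Q (S.image Prod.fst)
    · intro x hx
      obtain ⟨s, hs, rfl⟩ := Finset.mem_image.mp hx
      rw [heval]
      have h2 : (![s.1, (-c - a * s.1) / b] : Fin 2 → ℝ) = ![s.1, s.2] := by
        rw [← hsnd s hs]
      rw [h2]
      exact hz s hs
    · rw [Finset.card_image_of_injOn hinj]
      exact lt_of_le_of_lt (my_natDegree_aeval_le f hfd p) hcard
  intro x
  rw [← heval x, hQ0, Polynomial.eval_zero]

lemma my_factor (p : MvP) (a b c : ℝ) (hb : b ≠ 0) (hp : p ≠ 0)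
    (h0 : ∀ x : ℝ, eval ![x, (-c - a * x) / b] p = 0) :
    ∃ q : MvP, p = (C a * X 0 + C b * X 1 + C c) * q ∧ q.totalDegree + 1 ≤ p.totalDegree := by
  set σf : Fin 2 → MvP := ![X 0, C b⁻¹ * (X 1 - C a * X 0 - C c)] with hσf
  set τf : Fin 2 → MvP := ![X 0, C a * X 0 + C b * X 1 + C c] with hτf
  set w := MvPolynomial.aeval σf p with hw
  have hτσ : ∀ u : MvP, MvPolynomial.aeval τf (MvPolynomial.aeval σf u) = u := by
    intro u
    rw [MvPolynomial.comp_aeval_apply]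
    have hfun : (fun i => MvPolynomial.aeval τf (σf i)) = X := by
      funext i; fin_cases i
      · show MvPolynomial.aeval τf (σf 0) = X 0
        simp [hσf, hτf]
      · show MvPolynomial.aeval τf (σf 1) = X 1
        have h1 : σf 1 = C b⁻¹ * (X 1 - C a * X 0 - C c) := rfl
        have h2 : τf 1 = C a * X 0 + C b * X 1 + C c := rfl
        rw [h1]
        simp only [map_mul, map_sub, MvPolynomial.aeval_C, MvPolynomial.aeval_X,
          MvPolynomial.algebraMap_eq, h2, hτf, Matrix.cons_val_zero, Matrix.cons_val_one, Matrix.head_cons]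
        have h3 : (C a * X 0 + C b * X 1 + C c - C a * X 0 - C c : MvP) = C b * X 1 := by ring
        rw [h3, ← mul_assoc, ← C_mul, inv_mul_cancel₀ hb, C_1, one_mul]
    rw [hfun, MvPolynomial.aeval_X_left_apply]
  -- r = 0
  have hr : MvPolynomial.aeval ![X 0, (0:MvP)] w = 0 := by
    apply MvPolynomial.funext
    intro v
    rw [map_zero, my_eval_aeval, hw, my_eval_aeval]
    have hv : (fun i => eval (fun j => eval v (![(X 0 : MvP), 0] j)) (σf i))
        = ![v 0, (-c - a * v 0) / b] := by
      funext i; fin_cases i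
      · simp [hσf]
      · show eval (fun j => eval v (![(X 0 : MvP), 0] j)) (σf 1) = ![v 0, (-c - a * v 0) / b] 1
        simp only [hσf, Matrix.cons_val_one, Matrix.head_cons, map_mul, map_sub, eval_C, eval_X,
          Matrix.cons_val_zero, map_zero]
        field_simp
        ring
    rw [hv]
    exact h0 (v 0)
  have hdvd : (X 1 : MvP) ∣ w := by
    have h := my_X1_dvd w
    rwa [hr, sub_zero] at h
  obtain ⟨q', hq'⟩ := hdvd
  set q := MvPolynomial.aeval τf q' with hq
  have hpf : p = (C a * X 0 + C b * X 1 + C c) * q := by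
    conv_lhs => rw [← hτσ p, ← hw, hq', map_mul, MvPolynomial.aeval_X]
    rw [hq, hτf]
    simp
  -- degrees
  have hσdeg : ∀ i, (σf i).totalDegree ≤ 1 := by
    intro i; fin_cases i
    · simp [hσf, totalDegree_X]
    · simp only [hσf, Matrix.cons_val_one, Matrix.head_cons]
      refine (totalDegree_mul _ _).trans ?_
      rw [totalDegree_C, zero_add]
      refine (totalDegree_sub _ _).trans (max_le ((totalDegree_sub _ _).trans (max_le ?_ ?_)) ?_)
      · simp [totalDegree_X]
      · exact (totalDegree_mul _ _).trans (by simp [totalDegree_C, totalDegree_X])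
      · simp [totalDegree_C]
  have hτdeg : ∀ i, (τf i).totalDegree ≤ 1 := by
    intro i; fin_cases i
    · simp [hτf, totalDegree_X]
    · simp only [hτf, Matrix.cons_val_one, Matrix.head_cons]
      refine (totalDegree_add _ _).trans (max_le ((totalDegree_add _ _).trans (max_le ?_ ?_)) ?_)
      · exact (totalDegree_mul _ _).trans (by simp [totalDegree_C, totalDegree_X])
      · exact (totalDegree_mul _ _).trans (by simp [totalDegree_C, totalDegree_X])
      · simp [totalDegree_C]
  have hw0 : w ≠ 0 := by
    intro h
    apply hp
    rw [← hτσ p, ← hw, h, map_zero]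
  have hq'0 : q' ≠ 0 := by
    intro h
    exact hw0 (by rw [hq', h, mul_zero])
  have hq'deg : q'.totalDegree + 1 ≤ w.totalDegree := by
    obtain ⟨m, hm, hmax⟩ := Finset.exists_mem_eq_sup q'.support
      (MvPolynomial.support_nonempty.mpr hq'0) (fun m => m.sum fun _ e => e)
    have hmem : (Finsupp.single 1 1 + m) ∈ w.support := by
      rw [mem_support_iff, hq', coeff_X_mul]
      rwa [← mem_support_iff]
    have hsum : ((Finsupp.single 1 1 + m).sum fun _ e => e) = (m.sum fun _ e => e) + 1 := by
      rw [Finsupp.sum_add_index' (fun _ => rfl) (fun _ _ _ => rfl),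
        Finsupp.sum_single_index rfl]
      ring
    have := le_totalDegree hmem
    rw [hsum] at this
    rw [totalDegree, hmax]
    omega
  refine ⟨q, hpf, ?_⟩
  calc q.totalDegree + 1 ≤ q'.totalDegree + 1 :=
        Nat.add_le_add_right (my_totalDegree_aeval_le τf hτdeg q') 1
    _ ≤ w.totalDegree := hq'deg
    _ ≤ p.totalDegree := hw ▸ my_totalDegree_aeval_le σf hσdeg p

lemma my_main (d e : ℕ) (he1 : 1 ≤ e) (hed : e ≤ d) (p l : MvP) (hpdeg : p.totalDegree = e)
    (hldeg : l.totalDegree = 1) (B₁ : Finset (ℝ × ℝ))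
    (hlB1 : ∀ s ∈ B₁, eval ![s.1, s.2] l = 0)
    (hzB1 : ∀ s ∈ B₁, eval ![s.1, s.2] p = 0)
    (hB₁card : d < B₁.card) :
    ∃ q : MvP, p = l * q ∧ q.totalDegree + 1 ≤ e := by
  obtain ⟨a, b, c, hab, hleq⟩ := my_exists_abc l hldeg
  have hp0 : p ≠ 0 := by
    intro h
    rw [h, totalDegree_zero] at hpdeg
    omega
  have hlineB1 : ∀ s ∈ B₁, a * s.1 + b * s.2 + c = 0 := by
    intro s hs
    have h := hlB1 s hs
    rw [hleq] at h
    simpa using h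
  by_cases hb : b = 0
  · -- vertical line: swap coordinates
    have ha : a ≠ 0 := fun h => hab ⟨h, hb⟩
    set sw : Fin 2 → Fin 2 := ⇑(Equiv.swap (0 : Fin 2) 1) with hsw
    have hswsw : ∀ u : MvP, rename sw (rename sw u) = u := by
      intro u
      rw [rename_rename]
      have : sw ∘ sw = id := by
        funext i
        simp [hsw, Equiv.swap_apply_self]
      rw [this, rename_id, AlgHom.id_apply]
    have hevswap : ∀ (u : MvP) (x y : ℝ), eval ![x, y] (rename sw u) = eval ![y, x] u := by
      intro u x y
      rw [eval_rename]
      have : (![x, y]) ∘ sw = ![y, x] := by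
        funext i
        fin_cases i <;> simp [hsw]
      rw [this]
    set p' := rename sw p with hp'
    have hp'0 : p' ≠ 0 := by
      intro h
      apply hp0
      rw [← hswsw p, ← hp', h, map_zero]
    have hv : ∀ x : ℝ, eval ![x, (-c - b * x) / a] p' = 0 := by
      apply my_vanish p' b a c ha (B₁.image Prod.swap)
      · intro s hs
        obtain ⟨t, ht, rfl⟩ := Finset.mem_image.mp hs
        have := hlineB1 t ht
        simp only [Prod.fst_swap, Prod.snd_swap]
        linarith
      · intro s hs
        obtain ⟨t, ht, rfl⟩ := Finset.mem_image.mp hs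
        simp only [Prod.fst_swap, Prod.snd_swap, hp']
        rw [hevswap]
        exact hzB1 t ht
      · rw [Finset.card_image_of_injective _ Prod.swap_injective]
        calc p'.totalDegree ≤ p.totalDegree := totalDegree_rename_le _ _
          _ < B₁.card := by omega
    obtain ⟨q', hq', hdeg'⟩ := my_factor p' b a c ha hp'0 hv
    refine ⟨rename sw q', ?_, ?_⟩
    · have : p = rename sw p' := (hswsw p).symm
      rw [this, hq', map_mul]
      have hl : rename sw (C b * X 0 + C a * X 1 + C c) = l := by
        rw [hleq, hb]
        simp only [map_add, map_mul, rename_C, rename_X]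
        have h0 : sw 0 = 1 := by simp [hsw]
        have h1 : sw 1 = 0 := by simp [hsw]
        rw [h0, h1]
        ring
      rw [hl]
    · calc (rename sw q').totalDegree + 1 ≤ q'.totalDegree + 1 :=
            Nat.add_le_add_right (totalDegree_rename_le _ _) 1
        _ ≤ p'.totalDegree := hdeg'
        _ ≤ p.totalDegree := totalDegree_rename_le _ _
        _ = e := hpdeg
  · have hv : ∀ x : ℝ, eval ![x, (-c - a * x) / b] p = 0 := by
      apply my_vanish p a b c hb B₁ hlineB1 hzB1
      omega
    obtain ⟨q, hq, hdeg⟩ := my_factor p a b c hb hp0 hv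
    exact ⟨q, by rw [hleq]; exact hq, by omega⟩

lemma my_eq_C (q : MvPolynomial (Fin 2) ℝ) (h : q.totalDegree = 0) :
    q = MvPolynomial.C (MvPolynomial.coeff 0 q) := by
  have hall := (MvPolynomial.totalDegree_eq_zero_iff (Fin 2) q).mp h
  ext m
  by_cases hm : m = 0
  · subst hm; simp
  · rw [MvPolynomial.coeff_C, if_neg (fun hx => hm hx.symm)]
    by_contra hne
    have hmem : m ∈ q.support := MvPolynomial.mem_support_iff.mpr hne
    exact hm (Finsupp.ext fun i => hall m hmem i)

end MyAux

theorem stmt_15 (d : ℕ) (hd : 2 ≤ d) (L : Set (ℝ × ℝ)) (hL : IsCurve 1 L)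
    (B₀ : Finset (ℝ × ℝ)) (hB₀L : ∀ b ∈ B₀, b ∉ L)
    (hB₀card : B₀.card = Nat.choose (d + 1) 2)
    (hB₀ : ∀ C : Set (ℝ × ℝ), IsCurveLe (d - 1) C → ¬(↑B₀ ⊆ C))
    (B₁ : Finset (ℝ × ℝ)) (hB₁L : ↑B₁ ⊆ L) (hB₁card : d < B₁.card) :
    ∀ C : Set (ℝ × ℝ), IsCurveLe d C → ¬((↑(B₀ ∪ B₁) : Set (ℝ × ℝ)) ⊆ C) := by
  rintro Cu ⟨e, he1, hed, p, hpdeg, rfl⟩ hsub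
  obtain ⟨l, hldeg, rfl⟩ := hL
  have hzB1 : ∀ s ∈ B₁, MvPolynomial.eval ![s.1, s.2] p = 0 := by
    intro s hs
    have hmem : s ∈ (↑(B₀ ∪ B₁) : Set (ℝ × ℝ)) := by
      simp [Finset.mem_union, hs]
    exact hsub hmem
  have hlB1 : ∀ s ∈ B₁, MvPolynomial.eval ![s.1, s.2] l = 0 := by
    intro s hs
    exact hB₁L (Finset.mem_coe.mpr hs)
  obtain ⟨q, hpq, hqdeg⟩ := my_main d e he1 hed p l hpdeg hldeg B₁ hlB1 hzB1 hB₁card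
  have hp0 : p ≠ 0 := by
    intro h
    rw [h, MvPolynomial.totalDegree_zero] at hpdeg
    omega
  have hB0q : ∀ s ∈ B₀, MvPolynomial.eval ![s.1, s.2] q = 0 := by
    intro s hs
    have hzero : MvPolynomial.eval ![s.1, s.2] p = 0 := by
      apply hsub
      simp [Finset.mem_union, hs]
    have hlne : MvPolynomial.eval ![s.1, s.2] l ≠ 0 := fun h => hB₀L s hs h
    rw [hpq, map_mul] at hzero
    exact (mul_eq_zero.mp hzero).resolve_left hlne
  by_cases hq0 : q.totalDegree = 0
  · have hCq := my_eq_C q hq0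
    have hB0ne : B₀.Nonempty := by
      rw [← Finset.card_pos, hB₀card]
      exact Nat.choose_pos (by omega)
    obtain ⟨s, hs⟩ := hB0ne
    have hc := hB0q s hs
    rw [hCq, MvPolynomial.eval_C] at hc
    apply hp0
    rw [hpq, hCq, hc, map_zero, mul_zero]
  · refine hB₀ (zeroSet q) ⟨q.totalDegree, by omega, by omega, q, rfl, rfl⟩ ?_
    intro s hs
    exact hB0q s hs
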